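/- For every integer n ≥ 2 and every a > 0, the improper integral ∫_a^∞ ( sinh^{n−1}(a)·cosh(ρ) / sinh^n(ρ) )^n · sinh^{2n−2}(ρ) · (sinh^{2n−2}(ρ) − sinh^{2n−2}(a))^{−1/2} dρ is finite. (Up to the constant factor 2·(n(n−1))^{n/2}·Vol(S^{n−1}), this is the total extrinsic curvature ∫_{C_a} |A_a|^n dμ_a of the catenoid C_a, which is therefore finite.) -/

import Mathlib

open MeasureTheory

private lemma sinh_lower_aux (a ρ : ℝ) (ha : 0 < a) (hρ : a < ρ) :
    Real.sinh a + (ρ - a) ≤ Real.sinh ρ := by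
  have h0 : a + (ρ - a) = ρ := by ring
  have h1 := Real.sinh_add a (ρ - a)
  rw [h0] at h1
  have h2 : (1:ℝ) ≤ Real.cosh (ρ - a) := Real.one_le_cosh _
  have h3 : (1:ℝ) ≤ Real.cosh a := Real.one_le_cosh a
  have h4 : ρ - a ≤ Real.sinh (ρ - a) := Real.self_le_sinh_iff.2 (by linarith)
  have h5 : 0 < Real.sinh a := Real.sinh_pos_iff.2 ha
  nlinarith

private lemma pow_lower_aux (x y : ℝ) (hy : 0 ≤ y) (hxy : y ≤ x) (k : ℕ) :
    y ^ (k + 1) + (x - y) * y ^ k ≤ x ^ (k + 1) := by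
  have h1 : y ^ k ≤ x ^ k := pow_le_pow_left₀ hy hxy k
  have h2 : 0 ≤ y ^ k := pow_nonneg hy k
  have h3 : 0 ≤ x := hy.trans hxy
  calc y ^ (k + 1) + (x - y) * y ^ k = x * y ^ k := by ring
    _ ≤ x * x ^ k := by nlinarith
    _ = x ^ (k + 1) := by ring

/-- the radial density of the total extrinsic curvature `∫_{C_a} |A_a|^n dμ_a`
of the catenoid `C_a ⊂ ℍⁿ × ℝ` is integrable on `(a, ∞)`; hence the total extrinsic
curvature of `C_a` is finite. -/
theorem stmt_12 (n : ℕ) (hn : 2 ≤ n) (a : ℝ) (ha : 0 < a) :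
    IntegrableOn
      (fun ρ =>
        (Real.sinh a ^ (n - 1) * Real.cosh ρ / Real.sinh ρ ^ n) ^ n *
          (Real.sinh ρ ^ (2 * n - 2) /
            Real.sqrt (Real.sinh ρ ^ (2 * n - 2) - Real.sinh a ^ (2 * n - 2))))
      (Set.Ioi a) := by
  obtain ⟨l, rfl⟩ : ∃ l, n = l + 2 := ⟨n - 2, by omega⟩
  simp only [show l + 2 - 1 = l + 1 from rfl, show 2 * (l + 2) - 2 = 2 * l + 2 by omega]
  set f : ℝ → ℝ := fun ρ =>
    (Real.sinh a ^ (l + 1) * Real.cosh ρ / Real.sinh ρ ^ (l + 2)) ^ (l + 2) *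
      (Real.sinh ρ ^ (2 * l + 2) /
        Real.sqrt (Real.sinh ρ ^ (2 * l + 2) - Real.sinh a ^ (2 * l + 2))) with hf
  have hsa : 0 < Real.sinh a := Real.sinh_pos_iff.2 ha
  -- positivity of the sqrt argument on Ioi a
  have hden_pos : ∀ ρ ∈ Set.Ioi a,
      0 < Real.sinh ρ ^ (2 * l + 2) - Real.sinh a ^ (2 * l + 2) := by
    intro ρ hρ
    have h1 : Real.sinh a < Real.sinh ρ := Real.sinh_lt_sinh.2 hρ
    have := pow_lt_pow_left₀ h1 hsa.le (n := 2 * l + 2) (by omega)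
    linarith
  -- continuity of f on Ioi a
  have hcont : ContinuousOn f (Set.Ioi a) := by
    apply ContinuousOn.mul
    · apply ContinuousOn.pow
      apply ContinuousOn.div
      · exact (continuous_const.mul Real.continuous_cosh).continuousOn
      · exact (Real.continuous_sinh.pow _).continuousOn
      · intro ρ hρ
        exact pow_ne_zero _ (Real.sinh_pos_iff.2 (ha.trans hρ)).ne'
    · apply ContinuousOn.div
      · exact (Real.continuous_sinh.pow _).continuousOn
      · exact (Real.continuous_sqrt.comp
          ((Real.continuous_sinh.pow _).sub continuous_const)).continuousOn
      · intro ρ hρ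
        exact (Real.sqrt_pos.2 (hden_pos ρ hρ)).ne'
  -- nonnegativity of f on Ioi a
  have hf_nonneg : ∀ ρ ∈ Set.Ioi a, 0 ≤ f ρ := by
    intro ρ hρ
    have hsρ : 0 < Real.sinh ρ := Real.sinh_pos_iff.2 (ha.trans hρ)
    have hc : 0 < Real.cosh ρ := Real.cosh_pos ρ
    apply mul_nonneg
    · exact pow_nonneg (div_nonneg (mul_nonneg (pow_nonneg hsa.le _) hc.le)
        (pow_nonneg hsρ.le _)) _
    · exact div_nonneg (pow_nonneg hsρ.le _) (Real.sqrt_nonneg _)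
  -- Part 1: integrable on Ioc a (a+1)
  have part1 : IntegrableOn f (Set.Ioc a (a + 1)) := by
    set M : ℝ := ((Real.sinh a ^ (l + 1) * Real.cosh (a + 1) / Real.sinh a ^ (l + 2)) ^ (l + 2) *
      Real.sinh (a + 1) ^ (2 * l + 2)) / Real.sqrt (Real.sinh a ^ (2 * l + 1)) with hM
    have hsing : IntegrableOn (fun ρ => (ρ - a) ^ (-(1:ℝ) / 2)) (Set.Ioc a (a + 1)) := by
      have h1 : IntervalIntegrable (fun x : ℝ => x ^ (-(1:ℝ) / 2)) volume 0 1 :=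
        intervalIntegral.intervalIntegrable_rpow' (by norm_num)
      have h2 := h1.comp_sub_right a
      rw [zero_add, add_comm 1 a] at h2
      exact (intervalIntegrable_iff_integrableOn_Ioc_of_le (by linarith)).1 h2
    apply Integrable.mono' (g := fun ρ => M * (ρ - a) ^ (-(1:ℝ) / 2)) (hsing.const_mul M)
    · exact ((hcont.mono (Set.Ioc_subset_Ioi_self)).aestronglyMeasurable measurableSet_Ioc)
    · rw [ae_restrict_iff' measurableSet_Ioc]
      filter_upwards with ρ hρ
      obtain ⟨hρa, hρb⟩ := hρ
      have hsρ : 0 < Real.sinh ρ := Real.sinh_pos_iff.2 (ha.trans hρa)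
      have hsal : Real.sinh a ≤ Real.sinh ρ := (Real.sinh_lt_sinh.2 hρa).le
      have hcρ : Real.cosh ρ ≤ Real.cosh (a + 1) := by
        rcases eq_or_lt_of_le hρb with h | h
        · rw [h]
        · exact (Real.cosh_lt_cosh.2 (by
            rw [abs_of_pos (ha.trans hρa), abs_of_pos (by linarith)]; exact h)).le
      have hsρb : Real.sinh ρ ≤ Real.sinh (a + 1) := Real.sinh_le_sinh.2 hρb
      -- lower bound for den
      have hden : (ρ - a) * Real.sinh a ^ (2 * l + 1) ≤
          Real.sinh ρ ^ (2 * l + 2) - Real.sinh a ^ (2 * l + 2) := by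
        have h1 := pow_lower_aux (Real.sinh ρ) (Real.sinh a) hsa.le hsal (2 * l + 1)
        have h2 := sinh_lower_aux a ρ ha hρa
        have h3 : 0 ≤ Real.sinh a ^ (2 * l + 1) := pow_nonneg hsa.le _
        have h4 : (ρ - a) * Real.sinh a ^ (2 * l + 1) ≤
            (Real.sinh ρ - Real.sinh a) * Real.sinh a ^ (2 * l + 1) := by
          apply mul_le_mul_of_nonneg_right (by linarith) h3
        calc (ρ - a) * Real.sinh a ^ (2 * l + 1)
            ≤ (Real.sinh ρ - Real.sinh a) * Real.sinh a ^ (2 * l + 1) := h4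
          _ ≤ Real.sinh ρ ^ (2 * l + 2) - Real.sinh a ^ (2 * l + 2) := by
              have : 2 * l + 2 = (2 * l + 1) + 1 := rfl
              rw [this]; linarith
      have hsqrt : Real.sqrt (ρ - a) * Real.sqrt (Real.sinh a ^ (2 * l + 1)) ≤
          Real.sqrt (Real.sinh ρ ^ (2 * l + 2) - Real.sinh a ^ (2 * l + 2)) := by
        rw [← Real.sqrt_mul (by linarith : (0:ℝ) ≤ ρ - a)]
        exact Real.sqrt_le_sqrt hden
      have hsqrt_pos : 0 < Real.sqrt (ρ - a) * Real.sqrt (Real.sinh a ^ (2 * l + 1)) := by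
        apply mul_pos (Real.sqrt_pos.2 (by linarith)) (Real.sqrt_pos.2 (by positivity))
      rw [Real.norm_eq_abs, abs_of_nonneg (hf_nonneg ρ hρa)]
      have key : f ρ ≤
          (Real.sinh a ^ (l + 1) * Real.cosh (a + 1) / Real.sinh a ^ (l + 2)) ^ (l + 2) *
            (Real.sinh (a + 1) ^ (2 * l + 2) /
              (Real.sqrt (ρ - a) * Real.sqrt (Real.sinh a ^ (2 * l + 1)))) := by
        simp only [hf]
        gcongr
      refine key.trans (le_of_eq ?_)
      rw [neg_div, Real.rpow_neg (by linarith : (0:ℝ) ≤ ρ - a), ← Real.sqrt_eq_rpow]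
      rw [hM]
      generalize (Real.sinh a ^ (l + 1) * Real.cosh (a + 1) / Real.sinh a ^ (l + 2)) ^ (l + 2) = X
      have hc0 : Real.sqrt (ρ - a) ≠ 0 := (Real.sqrt_pos.2 (by linarith)).ne'
      have hd0 : Real.sqrt (Real.sinh a ^ (2 * l + 1)) ≠ 0 :=
        (Real.sqrt_pos.2 (by positivity)).ne'
      field_simp
  -- Part 2: integrable on Ioi (a+1)
  have part2 : IntegrableOn f (Set.Ioi (a + 1)) := by
    set r : ℝ := (Real.sinh a / Real.sinh (a + 1)) ^ (2 * l + 2) with hrdef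
    have hsa1 : Real.sinh a < Real.sinh (a + 1) := Real.sinh_lt_sinh.2 (by linarith)
    have hsa1_pos : 0 < Real.sinh (a + 1) := Real.sinh_pos_iff.2 (by linarith)
    have hr_lt : r < 1 := by
      apply pow_lt_one₀ (by positivity) ((div_lt_one hsa1_pos).2 hsa1) (by omega)
    have hr_nonneg : 0 ≤ r := by positivity
    set C : ℝ := (Real.sinh a ^ (l + 1) * 4 ^ (l + 2)) ^ (l + 2) *
      (4 ^ (l + 1) / Real.sqrt (1 - r)) with hC
    have hint : IntegrableOn (fun ρ => C * Real.exp (-(((l + 1) ^ 2 : ℕ) : ℝ) * ρ))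
        (Set.Ioi (a + 1)) :=
      (exp_neg_integrableOn_Ioi (a + 1) (by positivity)).const_mul C
    apply Integrable.mono' hint
    · exact ((hcont.mono (fun x hx => lt_trans (by linarith) hx)).aestronglyMeasurable
        measurableSet_Ioi)
    · rw [ae_restrict_iff' measurableSet_Ioi]
      filter_upwards with ρ hρ
      have hρ1 : a + 1 < ρ := hρ
      have hρa : a < ρ := by linarith
      have hρpos : (1:ℝ) < ρ := by linarith
      have hsρ : 0 < Real.sinh ρ := Real.sinh_pos_iff.2 (by linarith)
      set E : ℝ := Real.exp ρ with hE
      have hEpos : 0 < E := Real.exp_pos ρ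
      have hE2 : (2:ℝ) ≤ E := by
        have := Real.add_one_le_exp (1:ℝ)
        have h2 := Real.exp_le_exp.2 hρpos.le
        linarith
      have hexp_neg : Real.exp (-ρ) ≤ 1 := Real.exp_le_one_iff.2 (by linarith)
      have hcoshρ : Real.cosh ρ ≤ E := by
        rw [Real.cosh_eq]
        have : Real.exp (-ρ) ≤ Real.exp ρ := Real.exp_le_exp.2 (by linarith)
        rw [hE]; linarith
      have hsinh_up : Real.sinh ρ ≤ E := by
        rw [Real.sinh_eq]
        have := Real.exp_pos (-ρ)
        rw [hE]; linarith
      have hsinh_lo : E / 4 ≤ Real.sinh ρ := by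
        rw [Real.sinh_eq, hE]
        linarith
      -- lower bound on den via r
      have hsa_pow : Real.sinh a ^ (2 * l + 2) ≤ r * Real.sinh ρ ^ (2 * l + 2) := by
        have h1 : Real.sinh a = (Real.sinh a / Real.sinh (a + 1)) * Real.sinh (a + 1) := by
          field_simp
        have h2 : Real.sinh (a + 1) ≤ Real.sinh ρ := Real.sinh_le_sinh.2 (by linarith)
        calc Real.sinh a ^ (2 * l + 2)
            = r * Real.sinh (a + 1) ^ (2 * l + 2) := by rw [hrdef, ← mul_pow, ← h1]
          _ ≤ r * Real.sinh ρ ^ (2 * l + 2) := by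
              apply mul_le_mul_of_nonneg_left (pow_le_pow_left₀ hsa1_pos.le h2 _) hr_nonneg
      have hden_lo : (1 - r) * (Real.sinh ρ ^ (l + 1)) ^ 2 ≤
          Real.sinh ρ ^ (2 * l + 2) - Real.sinh a ^ (2 * l + 2) := by
        have : (Real.sinh ρ ^ (l + 1)) ^ 2 = Real.sinh ρ ^ (2 * l + 2) := by
          rw [← pow_mul]; ring_nf
        rw [this]; nlinarith [pow_pos hsρ (2 * l + 2)]
      have hsqrt : Real.sqrt (1 - r) * Real.sinh ρ ^ (l + 1) ≤
          Real.sqrt (Real.sinh ρ ^ (2 * l + 2) - Real.sinh a ^ (2 * l + 2)) := by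
        have h1 : Real.sqrt (1 - r) * Real.sinh ρ ^ (l + 1) =
            Real.sqrt ((1 - r) * (Real.sinh ρ ^ (l + 1)) ^ 2) := by
          rw [Real.sqrt_mul (by linarith), Real.sqrt_sq (pow_nonneg hsρ.le _)]
        rw [h1]
        exact Real.sqrt_le_sqrt hden_lo
      have hsqrt2 : Real.sqrt (1 - r) * (E / 4) ^ (l + 1) ≤
          Real.sqrt (Real.sinh ρ ^ (2 * l + 2) - Real.sinh a ^ (2 * l + 2)) := by
        refine le_trans ?_ hsqrt
        apply mul_le_mul_of_nonneg_left (pow_le_pow_left₀ (by positivity) hsinh_lo _)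
          (Real.sqrt_nonneg _)
      have hsqrt2_pos : 0 < Real.sqrt (1 - r) * (E / 4) ^ (l + 1) := by
        apply mul_pos (Real.sqrt_pos.2 (by linarith)) (by positivity)
      rw [Real.norm_eq_abs, abs_of_nonneg (hf_nonneg ρ hρa)]
      have key : f ρ ≤
          (Real.sinh a ^ (l + 1) * E / (E / 4) ^ (l + 2)) ^ (l + 2) *
            (E ^ (2 * l + 2) / (Real.sqrt (1 - r) * (E / 4) ^ (l + 1))) := by
        simp only [hf]
        gcongr
      refine key.trans (le_of_eq ?_)
      have hexp1 : Real.exp (-(((l + 1) ^ 2 : ℕ) : ℝ) * ρ) = (E ^ ((l + 1) ^ 2))⁻¹ := by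
        rw [neg_mul, Real.exp_neg, Real.exp_nat_mul, hE]
      rw [hexp1, hC]
      have hsq : (0:ℝ) < Real.sqrt (1 - r) := Real.sqrt_pos.2 (by linarith)
      have hE0 : E ≠ 0 := hEpos.ne'
      field_simp
      simp only [div_pow, mul_pow]
      field_simp
      ring
  -- combine
  have := part1.union part2
  rwa [Set.Ioc_union_Ioi_eq_Ioi (by linarith : a ≤ a + 1)] at this
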